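/- Let L > 0 and ν > −π²/L². Then there exist constants α > 0, β > 0 and C ≥ 0 such that for every four times continuously differentiable v : [0, L] → ℝ with ∫₀^L v(x) dx = 0, v'(0) = v'(L) = 0, v'''(0) = v'''(L) = 0, and every twice continuously differentiable h : [0, L] → ℝ with h(0) = h(L) = 0, one has 2∫₀^L v·(−v'''' + ν v'') dx − 2∫₀^L v·g'' dx ≤ −α ∫₀^L v² dx − β ∫₀^L (v'')² dx + C·(sup_{x∈[0,L]} |h(x)|)⁴ · ∫₀^L v² dx + C ∫₀^L h(x)⁴ dx, where g(x) = (v'(x) + h(x))². -/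

import Mathlib

open Real intervalIntegral MeasureTheory Filter Topology

lemma aux_exists_zero {L : ℝ} (hL : 0 < L) {v : ℝ → ℝ} (hv : Continuous v)
    (hint : (∫ x in (0:ℝ)..L, v x) = 0) : ∃ ξ ∈ Set.Icc (0:ℝ) L, v ξ = 0 := by
  by_contra hno
  push_neg at hno
  -- v has constant sign on [0,L]
  have hIcc : ∀ x ∈ Set.Icc (0:ℝ) L, v x ≠ 0 := hno
  have hv0 := hIcc 0 (by constructor <;> [rfl; exact hL.le] )
  rcases hv0.lt_or_gt with hneg | hpos
  · -- v 0 < 0 : show v < 0 on Icc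
    have hall : ∀ x ∈ Set.Icc (0:ℝ) L, v x < 0 := by
      intro x hx
      by_contra hge
      push_neg at hge
      have h0x : (0:ℝ) ≤ x := hx.1
      have : (0:ℝ) ∈ Set.Icc (v 0) (v x) := ⟨hneg.le, hge⟩
      have := intermediate_value_Icc h0x (hv.continuousOn) this
      obtain ⟨c, hc, hc0⟩ := this
      exact hIcc c ⟨hc.1, hc.2.trans hx.2⟩ hc0
    have : (0:ℝ) < ∫ x in (0:ℝ)..L, -v x := by
      apply intervalIntegral_pos_of_pos_on ((hv.neg).intervalIntegrable 0 L)
      · intro x hx; simpa using hall x ⟨hx.1.le, hx.2.le⟩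
      · exact hL
    rw [intervalIntegral.integral_neg, hint] at this
    simp at this
  · have hall : ∀ x ∈ Set.Icc (0:ℝ) L, 0 < v x := by
      intro x hx
      by_contra hge
      push_neg at hge
      have h0x : (0:ℝ) ≤ x := hx.1
      have : (0:ℝ) ∈ Set.Icc (v x) (v 0) := ⟨hge, hpos.le⟩
      obtain ⟨c, hc, hc0⟩ := intermediate_value_Icc' h0x (hv.continuousOn) this
      exact hIcc c ⟨hc.1, hc.2.trans hx.2⟩ hc0
    have : (0:ℝ) < ∫ x in (0:ℝ)..L, v x := by
      apply intervalIntegral_pos_of_pos_on (hv.intervalIntegrable 0 L)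
      · intro x hx; exact hall x ⟨hx.1.le, hx.2.le⟩
      · exact hL
    rw [hint] at this; simp at this

lemma lemA {L : ℝ} (hL : 0 < L) {v : ℝ → ℝ} (hv : Differentiable ℝ v)
    (hv' : Continuous (deriv v))
    (hint : (∫ x in (0:ℝ)..L, v x) = 0) :
    (∫ x in (0:ℝ)..L, (v x)^2) ≤ L^2 * ∫ x in (0:ℝ)..L, (deriv v x)^2 := by
  obtain ⟨ξ, hξ, hvξ⟩ := aux_exists_zero hL hv.continuous hint
  set Iv : ℝ := ∫ x in (0:ℝ)..L, |deriv v x| with hI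
  have hInn : 0 ≤ Iv := intervalIntegral.integral_nonneg hL.le (fun x _ => abs_nonneg _)
  have hbd : ∀ x ∈ Set.Icc (0:ℝ) L, |v x| ≤ Iv := by
    intro x hx
    have hftc : ∫ t in ξ..x, deriv v t = v x - v ξ :=
      intervalIntegral.integral_deriv_eq_sub (fun t _ => hv t) (hv'.intervalIntegrable _ _)
    have h1 : |v x| = |∫ t in ξ..x, deriv v t| := by rw [hftc, hvξ, sub_zero]
    rw [h1]
    rcases le_total ξ x with hxx | hxx
    · calc |∫ t in ξ..x, deriv v t| ≤ ∫ t in ξ..x, |deriv v t| :=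
            intervalIntegral.abs_integral_le_integral_abs hxx
        _ ≤ Iv := by
            apply intervalIntegral.integral_mono_interval hξ.1 hxx hx.2
            · filter_upwards with t using abs_nonneg _
            · exact (hv'.abs.intervalIntegrable _ _)
    · rw [intervalIntegral.integral_symm, abs_neg]
      calc |∫ t in x..ξ, deriv v t| ≤ ∫ t in x..ξ, |deriv v t| :=
            intervalIntegral.abs_integral_le_integral_abs hxx
        _ ≤ Iv := by
            apply intervalIntegral.integral_mono_interval hx.1 hxx hξ.2
            · filter_upwards with t using abs_nonneg _
            · exact (hv'.abs.intervalIntegrable _ _)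
  set Q : ℝ := ∫ x in (0:ℝ)..L, (deriv v x)^2 with hQ
  have hQnn : 0 ≤ Q := intervalIntegral.integral_nonneg hL.le (fun x _ => sq_nonneg _)
  have hIQ : Iv^2 ≤ L * Q := by
    rcases eq_or_lt_of_le hQnn with hQ0 | hQ0
    · -- Q = 0 : show Iv = 0
      have hI0 : Iv ≤ 0 := by
        by_contra hIpos
        push_neg at hIpos
        have key : Iv ≤ Iv/2 := by
          set ε := Iv/2 with hε
          have hεpos : 0 < ε := by positivity
          have ht : (0:ℝ) < L / (2*ε) := by positivity
          have hpt : ∀ x ∈ Set.Icc (0:ℝ) L,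
              |deriv v x| ≤ (L/(2*ε)/2) * (deriv v x)^2 + ((2*ε)/L/2) := by
            intro x _
            have h2 := sq_nonneg (Real.sqrt (L/(2*ε)) * |deriv v x| - Real.sqrt ((2*ε)/L))
            have e1 : Real.sqrt (L/(2*ε)) ^ 2 = L/(2*ε) := Real.sq_sqrt (by positivity)
            have e2 : Real.sqrt ((2*ε)/L) ^ 2 = (2*ε)/L := Real.sq_sqrt (by positivity)
            have e3 : Real.sqrt (L/(2*ε)) * Real.sqrt ((2*ε)/L) = 1 := by
              rw [← Real.sqrt_mul (by positivity)]
              rw [show L/(2*ε) * ((2*ε)/L) = 1 by field_simp]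
              exact Real.sqrt_one
            have hexp : (Real.sqrt (L/(2*ε)) * |deriv v x| - Real.sqrt ((2*ε)/L))^2
                = (L/(2*ε)) * (deriv v x)^2 - 2*|deriv v x| + (2*ε)/L := by
              have : (Real.sqrt (L/(2*ε)) * |deriv v x| - Real.sqrt ((2*ε)/L))^2
                  = Real.sqrt (L/(2*ε))^2 * |deriv v x|^2
                    - 2*(Real.sqrt (L/(2*ε)) * Real.sqrt ((2*ε)/L))*|deriv v x|
                    + Real.sqrt ((2*ε)/L)^2 := by ring
              rw [this, e1, e2, e3, sq_abs]; ring
            rw [hexp] at h2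
            linarith
          have hle : Iv ≤ ∫ x in (0:ℝ)..L, ((L/(2*ε)/2) * (deriv v x)^2 + ((2*ε)/L/2)) :=
            intervalIntegral.integral_mono_on hL.le (hv'.abs.intervalIntegrable _ _)
              (((continuous_const.mul (hv'.pow 2)).add continuous_const).intervalIntegrable _ _)
              hpt
          rw [intervalIntegral.integral_add (f := fun x => L/(2*ε)/2 * (deriv v x)^2)
                ((continuous_const.mul (hv'.pow 2)).intervalIntegrable _ _)
                intervalIntegrable_const,
              intervalIntegral.integral_const_mul, intervalIntegral.integral_const,
              ← hQ, ← hQ0] at hle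
          simp only [mul_zero, zero_add, smul_eq_mul, sub_zero] at hle
          calc Iv ≤ L * ((2*ε)/L/2) := hle
            _ = ε := by field_simp
        linarith
      have : Iv = 0 := le_antisymm hI0 hInn
      rw [this, ← hQ0]; norm_num
    · set a := Real.sqrt L with ha
      set b := Real.sqrt Q with hb
      have hapos : 0 < a := Real.sqrt_pos.mpr hL
      have hbpos : 0 < b := Real.sqrt_pos.mpr hQ0
      have ha2 : a^2 = L := Real.sq_sqrt hL.le
      have hb2 : b^2 = Q := Real.sq_sqrt hQnn
      have hpt : ∀ x ∈ Set.Icc (0:ℝ) L,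
          |deriv v x| ≤ (a/b/2) * (deriv v x)^2 + (b/a/2) := by
        intro x _
        have h2 := sq_nonneg (Real.sqrt (a/b) * |deriv v x| - Real.sqrt (b/a))
        have e1 : Real.sqrt (a/b) ^ 2 = a/b := Real.sq_sqrt (by positivity)
        have e2 : Real.sqrt (b/a) ^ 2 = b/a := Real.sq_sqrt (by positivity)
        have e3 : Real.sqrt (a/b) * Real.sqrt (b/a) = 1 := by
          rw [← Real.sqrt_mul (by positivity)]
          rw [show a/b * (b/a) = 1 by field_simp]
          exact Real.sqrt_one
        have hexp : (Real.sqrt (a/b) * |deriv v x| - Real.sqrt (b/a))^2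
            = (a/b) * (deriv v x)^2 - 2*|deriv v x| + b/a := by
          have : (Real.sqrt (a/b) * |deriv v x| - Real.sqrt (b/a))^2
              = Real.sqrt (a/b)^2 * |deriv v x|^2
                - 2*(Real.sqrt (a/b) * Real.sqrt (b/a))*|deriv v x|
                + Real.sqrt (b/a)^2 := by ring
          rw [this, e1, e2, e3, sq_abs]; ring
        rw [hexp] at h2
        linarith
      have hle : Iv ≤ ∫ x in (0:ℝ)..L, ((a/b/2) * (deriv v x)^2 + (b/a/2)) :=
        intervalIntegral.integral_mono_on hL.le (hv'.abs.intervalIntegrable _ _)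
          (((continuous_const.mul (hv'.pow 2)).add continuous_const).intervalIntegrable _ _)
          hpt
      rw [intervalIntegral.integral_add (f := fun x => a/b/2 * (deriv v x)^2)
            ((continuous_const.mul (hv'.pow 2)).intervalIntegrable _ _)
            intervalIntegrable_const,
          intervalIntegral.integral_const_mul, intervalIntegral.integral_const, ← hQ] at hle
      have hab : a/b/2 * Q + (L - 0) • (b/a/2) = a * b := by
        rw [smul_eq_mul, ← ha2, ← hb2]; field_simp; ring
      rw [hab] at hle
      calc Iv^2 ≤ (a*b)^2 := by nlinarith
        _ = L * Q := by rw [mul_pow, ha2, hb2]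
  -- conclude
  have hmono : (∫ x in (0:ℝ)..L, (v x)^2) ≤ ∫ x in (0:ℝ)..L, Iv^2 := by
    apply intervalIntegral.integral_mono_on (f := fun x => (v x)^2) hL.le
      ((hv.continuous.pow 2).intervalIntegrable _ _) intervalIntegrable_const
    intro x hx
    have := hbd x hx
    nlinarith [abs_nonneg (v x), sq_abs (v x)]
  rw [intervalIntegral.integral_const, smul_eq_mul, sub_zero] at hmono
  calc (∫ x in (0:ℝ)..L, (v x)^2) ≤ L * Iv^2 := hmono
    _ ≤ L * (L * Q) := by nlinarith
    _ = L^2 * Q := by ring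

lemma lemB {L : ℝ} (hL : 0 < L) {w : ℝ → ℝ} (hw : Differentiable ℝ w)
    (hw' : Continuous (deriv w)) (h0 : w 0 = 0) (hLe : w L = 0) :
    (π/L)^2 * ∫ x in (0:ℝ)..L, (w x)^2 ≤ ∫ x in (0:ℝ)..L, (deriv w x)^2 := by
  set k : ℝ := π/L with hk
  have hkpos : 0 < k := div_pos pi_pos hL
  have hkL : k * L = π := by rw [hk]; field_simp
  set c : ℝ → ℝ := fun x => k * Real.cos (k*x) / Real.sin (k*x) with hc
  set F : ℝ → ℝ := fun x => (w x)^2 * c x with hF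
  set F' : ℝ → ℝ := fun x => 2 * w x * deriv w x * c x
      - (w x)^2 * (k^2 / (Real.sin (k*x))^2) with hF'
  set G : ℝ → ℝ := fun x => (deriv w x)^2 - k^2 * (w x)^2 with hG
  have hGcont : Continuous G := by
    exact (hw'.pow 2).sub (continuous_const.mul ((hw.continuous.pow 2)))
  -- linear map derivative
  have hlin : ∀ x : ℝ, HasDerivAt (fun y => k * y) k x := fun x => by
    simpa using (hasDerivAt_id x).const_mul k
  have hsinD : ∀ x : ℝ, HasDerivAt (fun y => Real.sin (k*y)) (Real.cos (k*x) * k) x :=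
    fun x => (Real.hasDerivAt_sin (k*x)).comp x (hlin x)
  have hcosD : ∀ x : ℝ, HasDerivAt (fun y => Real.cos (k*y)) (-Real.sin (k*x) * k) x :=
    fun x => (Real.hasDerivAt_cos (k*x)).comp x (hlin x)
  -- positivity of sin on Ioo 0 L
  have hsinpos : ∀ x ∈ Set.Ioo (0:ℝ) L, 0 < Real.sin (k*x) := by
    intro x hx
    apply Real.sin_pos_of_pos_of_lt_pi (mul_pos hkpos hx.1)
    calc k * x < k * L := by exact mul_lt_mul_of_pos_left hx.2 hkpos
      _ = π := hkL
  -- derivative of F on Ioo 0 L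
  have hFD : ∀ x ∈ Set.Ioo (0:ℝ) L, HasDerivAt F (F' x) x := by
    intro x hx
    have hsne : Real.sin (k*x) ≠ 0 := (hsinpos x hx).ne'
    have hcD : HasDerivAt c (-(k^2) / (Real.sin (k*x))^2) x := by
      have hd := (((hcosD x).const_mul k).div (hsinD x) hsne)
      have hnum : k * (-Real.sin (k*x) * k) * Real.sin (k*x)
          - k * Real.cos (k*x) * (Real.cos (k*x) * k) = -(k^2) := by
        linear_combination (-(k^2)) * Real.sin_sq_add_cos_sq (k*x)
      rw [hnum] at hd
      exact hd
    have hwsq : HasDerivAt (fun y => (w y)^2) (2 * w x * deriv w x) x := by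
      have := ((hw x).hasDerivAt).pow 2
      exact this.congr_deriv (by push_cast; ring)
    have := hwsq.mul hcD
    exact this.congr_deriv (by simp only [hF']; ring)
  -- pointwise identity
  have hptid : ∀ x ∈ Set.Ioo (0:ℝ) L,
      G x - F' x = (deriv w x - c x * w x)^2 := by
    intro x hx
    have hsne : Real.sin (k*x) ≠ 0 := (hsinpos x hx).ne'
    have hcsq : (c x)^2 = k^2 / (Real.sin (k*x))^2 - k^2 := by
      have e1 : (c x)^2 = k^2 * (1 - Real.sin (k*x)^2) / (Real.sin (k*x))^2 := by
        simp only [hc]; rw [div_pow, mul_pow, Real.cos_sq']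
      rw [e1]
      field_simp
    have : (deriv w x - c x * w x)^2
        = (deriv w x)^2 - 2 * w x * deriv w x * c x + (c x)^2 * (w x)^2 := by ring
    rw [this, hcsq]
    simp only [hG, hF']
    ring
  -- continuity of F' on compact subsets of Ioo 0 L
  have hF'cont : ContinuousOn F' (Set.Ioo (0:ℝ) L) := by
    have hsin : ContinuousOn (fun x => Real.sin (k*x)) (Set.Ioo (0:ℝ) L) :=
      (Real.continuous_sin.comp (continuous_const.mul continuous_id)).continuousOn
    have hsne : ∀ x ∈ Set.Ioo (0:ℝ) L, Real.sin (k*x) ≠ 0 := fun x hx => (hsinpos x hx).ne'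
    have hccont : ContinuousOn c (Set.Ioo (0:ℝ) L) := by
      apply ContinuousOn.div
      · exact (continuous_const.mul
          (Real.continuous_cos.comp (continuous_const.mul continuous_id))).continuousOn
      · exact hsin
      · exact hsne
    apply ContinuousOn.sub
    · exact (((continuous_const.mul hw.continuous).mul hw').continuousOn.mul hccont)
    · apply ContinuousOn.mul (hw.continuous.pow 2).continuousOn
      apply ContinuousOn.div continuousOn_const (hsin.pow 2)
      intro x hx; exact pow_ne_zero _ (hsne x hx)
  -- primitive of G
  set P : ℝ → ℝ := fun t => ∫ x in (0:ℝ)..t, G x with hP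
  have hPcont : Continuous P :=
    intervalIntegral.continuous_primitive (fun a b => hGcont.intervalIntegrable a b) 0
  -- the key inequality for δ ∈ Ioo 0 (L/2)
  have hkey : ∀ δ ∈ Set.Ioo (0:ℝ) (L/2),
      F (L-δ) - F δ ≤ P (L-δ) - P δ := by
    intro δ hδ
    have hδle : δ ≤ L - δ := by linarith [hδ.2]
    have hsub : Set.Icc δ (L-δ) ⊆ Set.Ioo (0:ℝ) L := by
      intro x hx
      exact ⟨lt_of_lt_of_le hδ.1 hx.1, by linarith [hx.2, hδ.1]⟩
    have huIcc : Set.uIcc δ (L-δ) = Set.Icc δ (L-δ) := Set.uIcc_of_le hδle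
    have hF'int : IntervalIntegrable F' volume δ (L-δ) := by
      apply ContinuousOn.intervalIntegrable
      rw [huIcc]
      exact hF'cont.mono hsub
    have hFTC : ∫ x in δ..(L-δ), F' x = F (L-δ) - F δ := by
      apply intervalIntegral.integral_eq_sub_of_hasDerivAt
      · intro x hx
        rw [huIcc] at hx
        exact hFD x (hsub hx)
      · exact hF'int
    have hGint : IntervalIntegrable G volume δ (L-δ) := hGcont.intervalIntegrable _ _
    have hdiff : (∫ x in δ..(L-δ), G x) - ∫ x in δ..(L-δ), F' x
        = ∫ x in δ..(L-δ), (G x - F' x) := (intervalIntegral.integral_sub hGint hF'int).symm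
    have hnn : 0 ≤ ∫ x in δ..(L-δ), (G x - F' x) := by
      rw [intervalIntegral.integral_congr (g := fun x => (deriv w x - c x * w x)^2)
        (by rw [huIcc]; intro x hx; exact hptid x (hsub hx))]
      exact intervalIntegral.integral_nonneg hδle (fun x _ => sq_nonneg _)
    have hPdiff : P (L-δ) - P δ = ∫ x in δ..(L-δ), G x := by
      exact intervalIntegral.integral_interval_sub_left
        (hGcont.intervalIntegrable _ _) (hGcont.intervalIntegrable _ _)
    rw [hPdiff, ← hFTC]
    linarith [hnn, hdiff.symm.le, hdiff.le]
  -- membership of the small interval in the filter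
  have hIoo : Set.Ioo (0:ℝ) (L/2) ∈ 𝓝[>] (0:ℝ) :=
    Ioo_mem_nhdsGT_of_mem ⟨le_refl 0, by positivity⟩
  have hLsub : Tendsto (fun δ : ℝ => L - δ) (𝓝 (0:ℝ)) (𝓝 L) := by
    have hcont : Continuous (fun δ : ℝ => L - δ) := continuous_const.sub continuous_id
    have := hcont.tendsto (0:ℝ)
    simpa using this
  -- limit of the primitive difference
  have tP : Tendsto (fun δ => P (L-δ) - P δ) (𝓝[>] (0:ℝ)) (𝓝 (P L - P 0)) := by
    have h2 : Tendsto (fun δ => P (L - δ)) (𝓝[>] (0:ℝ)) (𝓝 (P L)) :=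
      (hPcont.tendsto L).comp (hLsub.mono_left nhdsWithin_le_nhds)
    have h3 : Tendsto P (𝓝[>] (0:ℝ)) (𝓝 (P 0)) :=
      (hPcont.tendsto 0).mono_left nhdsWithin_le_nhds
    exact h2.sub h3
  -- limit of δ itself
  have tid : Tendsto (fun δ : ℝ => δ) (𝓝[>] (0:ℝ)) (𝓝 0) :=
    tendsto_id.mono_left nhdsWithin_le_nhds
  -- limit of δ / sin (k δ)
  have tsin : Tendsto (fun δ => δ / Real.sin (k*δ)) (𝓝[>] (0:ℝ)) (𝓝 k⁻¹) := by
    have hs := hasDerivAt_iff_tendsto_slope.mp (hsinD 0)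
    have hs' : Tendsto (fun δ => Real.sin (k*δ) / δ) (𝓝[≠] (0:ℝ)) (𝓝 k) := by
      apply Tendsto.congr' _ (by simpa using hs)
      filter_upwards [self_mem_nhdsWithin] with δ hδ
      have hδ0 : δ ≠ 0 := hδ
      rw [slope_def_field]
      simp
    have hinv := hs'.inv₀ hkpos.ne'
    have : Tendsto (fun δ => δ / Real.sin (k*δ)) (𝓝[≠] (0:ℝ)) (𝓝 k⁻¹) := by
      apply Tendsto.congr _ hinv
      intro δ
      rw [inv_div]
    exact this.mono_left (nhdsWithin_mono 0 (fun x hx => ne_of_gt hx))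
  -- limit of k * cos (k δ)
  have tcos : Tendsto (fun δ => k * Real.cos (k*δ)) (𝓝[>] (0:ℝ)) (𝓝 (k * 1)) := by
    have hcont : Continuous fun δ : ℝ => k * Real.cos (k*δ) :=
      continuous_const.mul (Real.continuous_cos.comp (continuous_const.mul continuous_id))
    have h := hcont.tendsto 0
    simp only [mul_zero, Real.cos_zero] at h
    exact h.mono_left nhdsWithin_le_nhds
  -- slope limits at the two endpoints
  have slope0 : Tendsto (fun δ => w δ / δ) (𝓝[>] (0:ℝ)) (𝓝 (deriv w 0)) := by
    have h := hasDerivAt_iff_tendsto_slope.mp (hw 0).hasDerivAt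
    have h' : Tendsto (fun δ => w δ / δ) (𝓝[≠] (0:ℝ)) (𝓝 (deriv w 0)) := by
      apply Tendsto.congr' _ h
      filter_upwards [self_mem_nhdsWithin] with δ hδ
      rw [slope_def_field, h0]
      simp
    exact h'.mono_left (nhdsWithin_mono 0 (fun x hx => ne_of_gt hx))
  have slopeL : Tendsto (fun δ => w (L-δ) / δ) (𝓝[>] (0:ℝ)) (𝓝 (-(deriv w L))) := by
    have h := hasDerivAt_iff_tendsto_slope.mp (hw L).hasDerivAt
    have hmap : Tendsto (fun δ : ℝ => L - δ) (𝓝[>] (0:ℝ)) (𝓝[≠] L) := by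
      rw [tendsto_nhdsWithin_iff]
      constructor
      · exact hLsub.mono_left nhdsWithin_le_nhds
      · filter_upwards [self_mem_nhdsWithin] with δ hδ
        have : (0:ℝ) < δ := hδ
        simp only [Set.mem_compl_iff, Set.mem_singleton_iff]
        intro hcontra
        have : δ = 0 := by linarith [sub_eq_self.mp hcontra]
        linarith
    have hcomp := (h.comp hmap).neg
    apply Tendsto.congr' _ hcomp
    filter_upwards [self_mem_nhdsWithin] with δ hδ
    have hδ0 : (δ:ℝ) ≠ 0 := ne_of_gt hδ
    simp only [Function.comp_apply]
    rw [slope_def_field, hLe]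
    rw [show L - δ - L = -δ by ring, div_neg, neg_neg, sub_zero]
  -- limit of F at 0
  have tF0 : Tendsto (fun δ => F δ) (𝓝[>] (0:ℝ)) (𝓝 0) := by
    have hprod := (((slope0.pow 2).mul tid).mul tsin).mul tcos
    have hval : (deriv w 0)^2 * 0 * k⁻¹ * (k * 1) = 0 := by ring
    rw [hval] at hprod
    apply Tendsto.congr' _ hprod
    filter_upwards [self_mem_nhdsWithin] with δ hδ
    have hδ0 : (δ:ℝ) ≠ 0 := ne_of_gt hδ
    simp only [hF, hc]
    rcases eq_or_ne (Real.sin (k*δ)) 0 with hs | hs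
    · rw [hs]; simp
    · field_simp
  -- limit of F at L
  have tFL : Tendsto (fun δ => F (L-δ)) (𝓝[>] (0:ℝ)) (𝓝 0) := by
    have hprod := ((((slopeL.pow 2).mul tid).mul tsin).mul tcos).neg
    have hval : -((-(deriv w L))^2 * 0 * k⁻¹ * (k * 1)) = 0 := by ring
    rw [hval] at hprod
    apply Tendsto.congr' _ hprod
    filter_upwards [self_mem_nhdsWithin] with δ hδ
    have hδ0 : (δ:ℝ) ≠ 0 := ne_of_gt hδ
    have harg : k*(L-δ) = π - k*δ := by rw [mul_sub, hkL]
    simp only [hF, hc, harg, Real.sin_pi_sub, Real.cos_pi_sub]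
    rcases eq_or_ne (Real.sin (k*δ)) 0 with hs | hs
    · rw [hs]; simp
    · field_simp
  -- pass to the limit
  have hfinal : (0:ℝ) - 0 ≤ P L - P 0 := by
    apply le_of_tendsto_of_tendsto (tFL.sub tF0) tP
    filter_upwards [hIoo] with δ hδ
    exact hkey δ hδ
  have hP0 : P 0 = 0 := intervalIntegral.integral_same
  have hPL : P L = (∫ x in (0:ℝ)..L, (deriv w x)^2) - k^2 * ∫ x in (0:ℝ)..L, (w x)^2 := by
    simp only [hP, hG]
    rw [intervalIntegral.integral_sub (f := fun x => (deriv w x)^2) (g := fun x => k^2 * (w x)^2) ((hw'.pow 2).intervalIntegrable _ _)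
      ((continuous_const.mul (hw.continuous.pow 2)).intervalIntegrable _ _),
      intervalIntegral.integral_const_mul]
  rw [hP0, hPL] at hfinal
  linarith

lemma ptA {a b s r : ℝ} (hs : 0 < s) (hr : 0 < r) (hsr : 1 ≤ 4*s*r) :
    -(a*b) ≤ s*a^2 + r*b^2 := by
  nlinarith [sq_nonneg (2*s*a + b), sq_nonneg b, mul_pos hs hr, sq_nonneg a]

lemma ptB {c b hval m e f : ℝ} (hm : |hval| ≤ m) (he : 0 < e) (hf : 0 ≤ f)
    (hef : 4*m^2 ≤ e*f) : -(4*(c*b*hval)) ≤ e*c^2 + f*b^2 := by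
  have h2 : hval^2 ≤ m^2 := by nlinarith [sq_abs hval, abs_nonneg hval]
  nlinarith [sq_nonneg (e*c + 2*b*hval), sq_nonneg b, sq_nonneg (b*hval), he.le,
    mul_nonneg (sq_nonneg b) (sub_nonneg.mpr h2)]

lemma ptC {c q e g : ℝ} (he : 0 < e) (hg : 0 ≤ g) (heg : 1 ≤ e*g) :
    -(2*(c*q^2)) ≤ e*c^2 + g*q^4 := by
  nlinarith [sq_nonneg (e*c + q^2), sq_nonneg (q^2), he.le]

/-- Dissipativity estimate (4.2): for `L > 0` and `ν > -π²/L²` there exist `α, β > 0` and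
`C ≥ 0` such that for every zero-mean `v` with Neumann-type boundary conditions and every
`h` vanishing at the endpoints,
`2∫ v(-v'''' + ν v'') - 2∫ v g'' ≤ -α ∫ v² - β ∫ (v'')² + C (sup|h|)⁴ ∫ v² + C ∫ h⁴`,
where `g = (v' + h)²`. -/
theorem stmt14 (L : ℝ) (hL : 0 < L) (ν : ℝ) (hν : -π^2 / L^2 < ν) :
    ∃ α > (0:ℝ), ∃ β > (0:ℝ), ∃ C : ℝ, 0 ≤ C ∧
      ∀ v : ℝ → ℝ, ContDiff ℝ 4 v → (∫ x in (0:ℝ)..L, v x) = 0 →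
        deriv v 0 = 0 → deriv v L = 0 →
        deriv (deriv (deriv v)) 0 = 0 → deriv (deriv (deriv v)) L = 0 →
      ∀ h : ℝ → ℝ, ContDiff ℝ 2 h → h 0 = 0 → h L = 0 →
        2 * (∫ x in (0:ℝ)..L,
              v x * (-(deriv (deriv (deriv (deriv v))) x) + ν * deriv (deriv v) x))
          - 2 * (∫ x in (0:ℝ)..L,
              v x * deriv (deriv (fun y => (deriv v y + h y)^2)) x)
        ≤ -α * (∫ x in (0:ℝ)..L, (v x)^2)
          - β * (∫ x in (0:ℝ)..L, (deriv (deriv v) x)^2)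
          + C * (⨆ x : Set.Icc (0:ℝ) L, |h x|)^4 * (∫ x in (0:ℝ)..L, (v x)^2)
          + C * ∫ x in (0:ℝ)..L, (h x)^4 := by
  have hlampos : (0:ℝ) < (π/L)^2 := by positivity
  have hνlam : -(π/L)^2 < ν := by
    have hdp : (π/L)^2 = π^2/L^2 := by rw [div_pow]
    rw [hdp]
    have : -π^2 / L^2 = -(π^2/L^2) := by ring
    linarith [hν, this.symm.le]
  set lam : ℝ := (π/L)^2 with hlamd
  set γ : ℝ := min 1 ((lam + ν)/lam) with hγd
  have hγpos : 0 < γ := lt_min one_pos (div_pos (by linarith) hlampos)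
  have hγ1 : γ ≤ 1 := min_le_left _ _
  have hγlam : γ * lam ≤ lam + ν := by
    have h2 := min_le_right (1:ℝ) ((lam + ν)/lam)
    calc γ * lam ≤ ((lam + ν)/lam) * lam := by
          apply mul_le_mul_of_nonneg_right _ hlampos.le
          exact h2
      _ = lam + ν := by field_simp
  set μ : ℝ := (2-γ)*lam + 2*ν with hμd
  have hμpos : 0 < μ := by
    have : μ = (2*lam - γ*lam) + 2*ν := by rw [hμd]; ring
    rw [this]; linarith
  have hγne : γ ≠ 0 := hγpos.ne'
  clear_value lam γ μ
  refine ⟨μ/(2*L^2), div_pos hμpos (by positivity), γ/4, by linarith,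
    256/γ^3 + 4/γ,
    add_nonneg (div_nonneg (by norm_num) (pow_pos hγpos 3).le)
      (div_nonneg (by norm_num) hγpos.le), ?_⟩
  intro v hv hmean hb1 hb1L hb3 hb3L h hh hh0 hhL
  -- derivative abbreviations
  set v1 : ℝ → ℝ := deriv v with hv1d
  set v2 : ℝ → ℝ := deriv v1 with hv2d
  set v3 : ℝ → ℝ := deriv v2 with hv3d
  set v4 : ℝ → ℝ := deriv v3 with hv4d
  -- regularity chain
  have hcd1 : ContDiff ℝ 3 v1 := by
    rw [hv1d]
    have h4 : ContDiff ℝ (3+1 : WithTop ℕ∞) v := by norm_num; exact hv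
    exact (contDiff_succ_iff_deriv.mp h4).2.2
  have hcd2 : ContDiff ℝ 2 v2 := by
    rw [hv2d]
    have h3 : ContDiff ℝ (2+1 : WithTop ℕ∞) v1 := by norm_num; exact hcd1
    exact (contDiff_succ_iff_deriv.mp h3).2.2
  have hcd3 : ContDiff ℝ 1 v3 := by
    rw [hv3d]
    have h2 : ContDiff ℝ (1+1 : WithTop ℕ∞) v2 := by norm_num; exact hcd2
    exact (contDiff_succ_iff_deriv.mp h2).2.2
  have hd : Differentiable ℝ v := hv.differentiable (by norm_num)
  have hd1 : Differentiable ℝ v1 := hcd1.differentiable (by norm_num)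
  have hd2 : Differentiable ℝ v2 := hcd2.differentiable (by norm_num)
  have hd3 : Differentiable ℝ v3 := hcd3.differentiable (by norm_num)
  have hc0 : Continuous v := hd.continuous
  have hc1 : Continuous v1 := hd1.continuous
  have hc2 : Continuous v2 := hd2.continuous
  have hc3 : Continuous v3 := hd3.continuous
  have hc4 : Continuous v4 := by rw [hv4d]; exact hcd3.continuous_deriv (le_refl 1)
  have hdh : Differentiable ℝ h := hh.differentiable (by norm_num)
  have hch : Continuous h := hdh.continuous
  have hcdh1 : ContDiff ℝ 1 (deriv h) := by
    have h2 : ContDiff ℝ (1+1 : WithTop ℕ∞) h := by norm_num; exact hh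
    exact (contDiff_succ_iff_deriv.mp h2).2.2
  have hddh : Differentiable ℝ (deriv h) := hcdh1.differentiable (by norm_num)
  have hch1 : Continuous (deriv h) := hddh.continuous
  -- the function g1 = derivative of (v1 + h)^2
  set g1 : ℝ → ℝ := fun x => 2*(v1 x + h x)*(v2 x + deriv h x) with hg1d
  have hgd : ∀ x : ℝ, HasDerivAt (fun y => (v1 y + h y)^2) (g1 x) x := by
    intro x
    have hsum : HasDerivAt (fun y => v1 y + h y) (v2 x + deriv h x) x :=
      ((hd1 x).hasDerivAt).add ((hdh x).hasDerivAt)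
    have := hsum.pow 2
    exact this.congr_deriv (by rw [hg1d]; push_cast; ring)
  have hderivg : deriv (fun y => (v1 y + h y)^2) = g1 := funext fun x => (hgd x).deriv
  have hcg1 : ContDiff ℝ 1 g1 := by
    rw [hg1d]
    have h1 : ContDiff ℝ 1 (fun x => v1 x + h x) :=
      (hcd1.of_le (by norm_num)).add (hh.of_le (by norm_num))
    have h2 : ContDiff ℝ 1 (fun x => v2 x + deriv h x) :=
      (hcd2.of_le (by norm_num)).add hcdh1
    exact (contDiff_const.mul h1).mul h2
  have hdg1 : Differentiable ℝ g1 := hcg1.differentiable (by norm_num)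
  have hcg1' : Continuous g1 := hdg1.continuous
  have hcdg1 : Continuous (deriv g1) := hcg1.continuous_deriv (le_refl 1)
  -- scalar integrals
  set Aq : ℝ := ∫ x in (0:ℝ)..L, (v x)^2 with hAqd
  set Dq : ℝ := ∫ x in (0:ℝ)..L, (v2 x)^2 with hDqd
  set Eq4 : ℝ := ∫ x in (0:ℝ)..L, (h x)^4 with hEqd
  have hBqdef : True := trivial
  set Bq : ℝ := ∫ x in (0:ℝ)..L, (v1 x)^2 with hBqd
  set N1 : ℝ := ∫ x in (0:ℝ)..L, v2 x * v1 x * h x with hN1d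
  set N2 : ℝ := ∫ x in (0:ℝ)..L, v2 x * (h x)^2 with hN2d
  set M : ℝ := ⨆ x : Set.Icc (0:ℝ) L, |h x| with hMd
  -- nonnegativity
  have hAq : 0 ≤ Aq := intervalIntegral.integral_nonneg hL.le (fun x _ => sq_nonneg _)
  have hBq : 0 ≤ Bq := intervalIntegral.integral_nonneg hL.le (fun x _ => sq_nonneg _)
  have hDq : 0 ≤ Dq := intervalIntegral.integral_nonneg hL.le (fun x _ => sq_nonneg _)
  have hEq : 0 ≤ Eq4 := intervalIntegral.integral_nonneg hL.le
    (fun x _ => by positivity)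
  -- sup facts
  have hMbdd : BddAbove (Set.range fun x : Set.Icc (0:ℝ) L => |h x|) := by
    have himg : (Set.range fun x : Set.Icc (0:ℝ) L => |h x|)
        = (fun y => |h y|) '' Set.Icc (0:ℝ) L :=
      (Set.image_eq_range (fun y => |h y|) (Set.Icc (0:ℝ) L)).symm
    rw [himg]
    exact (isCompact_Icc.image (continuous_abs.comp hch)).bddAbove
  haveI : Nonempty (Set.Icc (0:ℝ) L) := ⟨⟨0, le_refl 0, hL.le⟩⟩
  have hMle : ∀ x ∈ Set.Icc (0:ℝ) L, |h x| ≤ M := by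
    intro x hx
    exact le_ciSup hMbdd (⟨x, hx⟩ : Set.Icc (0:ℝ) L)
  have hM0 : 0 ≤ M := le_trans (abs_nonneg (h 0)) (hMle 0 ⟨le_refl 0, hL.le⟩)
  clear_value Aq Dq Eq4 Bq N1 N2 M
  -- integration by parts identities
  have huIcc : Set.uIcc (0:ℝ) L = Set.Icc 0 L := Set.uIcc_of_le hL.le
  have e1a : (∫ x in (0:ℝ)..L, v x * v4 x)
      = v L * v3 L - v 0 * v3 0 - ∫ x in (0:ℝ)..L, v1 x * v3 x :=
    intervalIntegral.integral_mul_deriv_eq_deriv_mul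
      (fun x _ => (hd x).hasDerivAt) (fun x _ => (hd3 x).hasDerivAt)
      (hc1.intervalIntegrable _ _) (hc4.intervalIntegrable _ _)
  have e1b : (∫ x in (0:ℝ)..L, v1 x * v3 x)
      = v1 L * v2 L - v1 0 * v2 0 - ∫ x in (0:ℝ)..L, v2 x * v2 x :=
    intervalIntegral.integral_mul_deriv_eq_deriv_mul
      (fun x _ => (hd1 x).hasDerivAt) (fun x _ => (hd2 x).hasDerivAt)
      (hc2.intervalIntegrable _ _) (hc3.intervalIntegrable _ _)
  have hsq2 : (∫ x in (0:ℝ)..L, v2 x * v2 x) = Dq := by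
    rw [hDqd]
    apply intervalIntegral.integral_congr
    intro x _; ring
  have e1 : (∫ x in (0:ℝ)..L, v x * v4 x) = Dq := by
    rw [e1a, e1b, hb1, hb1L, hb3, hb3L, hsq2]; ring
  have e2a : (∫ x in (0:ℝ)..L, v x * v2 x)
      = v L * v1 L - v 0 * v1 0 - ∫ x in (0:ℝ)..L, v1 x * v1 x :=
    intervalIntegral.integral_mul_deriv_eq_deriv_mul
      (fun x _ => (hd x).hasDerivAt) (fun x _ => (hd1 x).hasDerivAt)
      (hc1.intervalIntegrable _ _) (hc2.intervalIntegrable _ _)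
  have hsq1 : (∫ x in (0:ℝ)..L, v1 x * v1 x) = Bq := by
    rw [hBqd]
    apply intervalIntegral.integral_congr
    intro x _; ring
  have e2 : (∫ x in (0:ℝ)..L, v x * v2 x) = -Bq := by
    rw [e2a, hb1, hb1L, hsq1]; ring
  -- g'' integration by parts
  have e3 : (∫ x in (0:ℝ)..L, v x * deriv g1 x)
      = v L * g1 L - v 0 * g1 0 - ∫ x in (0:ℝ)..L, v1 x * g1 x :=
    intervalIntegral.integral_mul_deriv_eq_deriv_mul
      (fun x _ => (hd x).hasDerivAt) (fun x _ => (hdg1 x).hasDerivAt)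
      (hc1.intervalIntegrable _ _) (hcdg1.intervalIntegrable _ _)
  have hg10 : g1 0 = 0 := by rw [hg1d]; simp [hb1, hh0]
  have hg1L : g1 L = 0 := by rw [hg1d]; simp [hb1L, hhL]
  have e4 : (∫ x in (0:ℝ)..L, v1 x * g1 x)
      = v1 L * (v1 L + h L)^2 - v1 0 * (v1 0 + h 0)^2
        - ∫ x in (0:ℝ)..L, v2 x * (v1 x + h x)^2 :=
    intervalIntegral.integral_mul_deriv_eq_deriv_mul
      (fun x _ => (hd1 x).hasDerivAt) (fun x _ => hgd x)
      (hc2.intervalIntegrable _ _) (hcg1'.intervalIntegrable _ _)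
  -- ∫ v2 v1² = 0
  have e5 : (∫ x in (0:ℝ)..L, v2 x * (v1 x)^2) = 0 := by
    have hphi : ∀ x : ℝ, HasDerivAt (fun y => (v1 y)^3/3) (v2 x * (v1 x)^2) x := by
      intro x
      have := (((hd1 x).hasDerivAt).pow 3).div_const 3
      exact this.congr_deriv (by push_cast; ring)
    have := intervalIntegral.integral_eq_sub_of_hasDerivAt
      (a := (0:ℝ)) (b := L)
      (f := fun y => (v1 y)^3/3) (f' := fun x => v2 x * (v1 x)^2)
      (fun x _ => hphi x)
      (((hc2.mul (hc1.pow 2))).intervalIntegrable _ _)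
    rw [this]
    show v1 L^3/3 - v1 0^3/3 = 0
    rw [hb1, hb1L]
    norm_num
  clear_value v1 v2 v3 v4 g1
  -- expansion of the nonlinear integral
  have e6 : (∫ x in (0:ℝ)..L, v2 x * (v1 x + h x)^2)
      = (∫ x in (0:ℝ)..L, v2 x * (v1 x)^2) + (2*N1 + N2) := by
    have hfe : Set.EqOn (fun x => v2 x * (v1 x + h x)^2)
        (fun x => v2 x * (v1 x)^2 + (2*(v2 x * v1 x * h x) + v2 x * (h x)^2))
        (Set.uIcc (0:ℝ) L) := by
      intro x _; simp only; ring
    rw [intervalIntegral.integral_congr hfe]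
    rw [intervalIntegral.integral_add (f := fun x => v2 x * (v1 x)^2) (g := fun x => 2*(v2 x * v1 x * h x) + v2 x * (h x)^2) ((hc2.mul (hc1.pow 2)).intervalIntegrable _ _)
        (((continuous_const.mul ((hc2.mul hc1).mul hch)).add
          (hc2.mul (hch.pow 2))).intervalIntegrable _ _),
      intervalIntegral.integral_add (f := fun x => 2*(v2 x * v1 x * h x)) (g := fun x => v2 x * (h x)^2)
        ((continuous_const.mul ((hc2.mul hc1).mul hch)).intervalIntegrable _ _)
        ((hc2.mul (hch.pow 2)).intervalIntegrable _ _),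
      intervalIntegral.integral_const_mul]
    rw [← hN1d, ← hN2d]
  have e7 : (∫ x in (0:ℝ)..L, v x * deriv g1 x) = 2*N1 + N2 := by
    rw [e3, e4, hg10, hg1L, e5] at *
    rw [e6, e5, hb1, hb1L]
    ring
  -- linear part
  have e8 : (∫ x in (0:ℝ)..L, v x * (-(v4 x) + ν * v2 x)) = -Dq + ν * (-Bq) := by
    have hfe : Set.EqOn (fun x => v x * (-(v4 x) + ν * v2 x))
        (fun x => -(v x * v4 x) + ν * (v x * v2 x)) (Set.uIcc (0:ℝ) L) := by
      intro x _; simp only; ring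
    rw [intervalIntegral.integral_congr hfe]
    rw [intervalIntegral.integral_add (f := fun x => -(v x * v4 x)) (g := fun x => ν * (v x * v2 x)) (((hc0.mul hc4).neg).intervalIntegrable _ _)
        ((continuous_const.mul (hc0.mul hc2)).intervalIntegrable _ _),
      intervalIntegral.integral_neg, intervalIntegral.integral_const_mul, e1, e2]
  -- Poincaré inequalities
  have F1 : lam * Bq ≤ Dq := by
    rw [hlamd, hBqd, hDqd, hv2d]
    exact lemB hL hd1 (by rw [← hv2d]; exact hc2) hb1 hb1L
  have F2 : Aq ≤ L^2 * Bq := by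
    rw [hAqd, hBqd, hv1d]
    exact lemA hL hd (by rw [← hv1d]; exact hc1) hmean
  -- interpolation
  have IneqB : ∀ s r : ℝ, 0 < s → 0 < r → 1 ≤ 4*s*r → Bq ≤ s*Aq + r*Dq := by
    intro s r hs hr hsr
    have hBneg : Bq = ∫ x in (0:ℝ)..L, -(v x * v2 x) := by
      rw [intervalIntegral.integral_neg, e2]; ring
    rw [hBneg]
    have hmono : (∫ x in (0:ℝ)..L, -(v x * v2 x))
        ≤ ∫ x in (0:ℝ)..L, (s*(v x)^2 + r*(v2 x)^2) := by
      apply intervalIntegral.integral_mono_on hL.le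
        (((hc0.mul hc2).neg).intervalIntegrable _ _)
        (((continuous_const.mul (hc0.pow 2)).add
          (continuous_const.mul (hc2.pow 2))).intervalIntegrable _ _)
      intro x _
      exact ptA hs hr hsr
    calc (∫ x in (0:ℝ)..L, -(v x * v2 x))
        ≤ ∫ x in (0:ℝ)..L, (s*(v x)^2 + r*(v2 x)^2) := hmono
      _ = s*Aq + r*Dq := by
          rw [intervalIntegral.integral_add (f := fun x => s*(v x)^2) (g := fun x => r*(v2 x)^2)
              ((continuous_const.mul (hc0.pow 2)).intervalIntegrable _ _)
              ((continuous_const.mul (hc2.pow 2)).intervalIntegrable _ _),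
            intervalIntegral.integral_const_mul, intervalIntegral.integral_const_mul,
            hAqd, hDqd]
  -- F3 : N1 bound
  have F3 : -(4*N1) ≤ (γ/4)*Dq + (16*M^2/γ)*Bq := by
    have hint : -(4*N1) = ∫ x in (0:ℝ)..L, -(4*(v2 x * v1 x * h x)) := by
      rw [hN1d, ← intervalIntegral.integral_const_mul, ← intervalIntegral.integral_neg]
    rw [hint]
    have hmono : (∫ x in (0:ℝ)..L, -(4*(v2 x * v1 x * h x)))
        ≤ ∫ x in (0:ℝ)..L, ((γ/4)*(v2 x)^2 + (16*M^2/γ)*(v1 x)^2) := by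
      apply intervalIntegral.integral_mono_on hL.le
        (((continuous_const.mul ((hc2.mul hc1).mul hch)).neg).intervalIntegrable _ _)
        (((continuous_const.mul (hc2.pow 2)).add
          (continuous_const.mul (hc1.pow 2))).intervalIntegrable _ _)
      intro x hx
      apply ptB (hMle x hx) (by linarith : (0:ℝ) < γ/4)
        (div_nonneg (mul_nonneg (by norm_num : (0:ℝ) ≤ 16) (sq_nonneg M)) hγpos.le)
      have heq : (γ/4)*(16*M^2/γ) = 4*M^2 := by field_simp; ring
      rw [heq]
    calc (∫ x in (0:ℝ)..L, -(4*(v2 x * v1 x * h x)))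
        ≤ ∫ x in (0:ℝ)..L, ((γ/4)*(v2 x)^2 + (16*M^2/γ)*(v1 x)^2) := hmono
      _ = (γ/4)*Dq + (16*M^2/γ)*Bq := by
          rw [intervalIntegral.integral_add (f := fun x => (γ/4)*(v2 x)^2) (g := fun x => (16*M^2/γ)*(v1 x)^2)
              ((continuous_const.mul (hc2.pow 2)).intervalIntegrable _ _)
              ((continuous_const.mul (hc1.pow 2)).intervalIntegrable _ _),
            intervalIntegral.integral_const_mul, intervalIntegral.integral_const_mul,
            hBqd, hDqd]
  -- F4 : absorb the M²B term
  have F4 : (16*M^2/γ)*Bq ≤ (γ/4)*Dq + (256/γ^3)*(M^4*Aq) := by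
    rcases eq_or_lt_of_le hM0 with hM0' | hMpos
    · rw [← hM0']
      have h1 : (16*(0:ℝ)^2/γ)*Bq = 0 := by norm_num
      have h2 : 0 ≤ (γ/4)*Dq := mul_nonneg (by linarith) hDq
      have h3 : 0 ≤ (256/γ^3)*((0:ℝ)^4*Aq) := by
        apply mul_nonneg (div_nonneg (by norm_num) (pow_pos hγpos 3).le)
        norm_num
      linarith
    · have hM2 : (0:ℝ) < M^2 := pow_pos hMpos 2
      have hs : (0:ℝ) < 16*M^2/γ^2 := div_pos (by linarith) (pow_pos hγpos 2)
      have hr : (0:ℝ) < γ^2/(64*M^2) := div_pos (pow_pos hγpos 2) (by linarith)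
      have hMne : M ≠ 0 := hMpos.ne'
      have hsr : (1:ℝ) ≤ 4*(16*M^2/γ^2)*(γ^2/(64*M^2)) := by
        have heq1 : 4*(16*M^2/γ^2)*(γ^2/(64*M^2)) = 1 := by
          field_simp
          ring
        rw [heq1]
      have h1 := IneqB _ _ hs hr hsr
      have h2 := mul_le_mul_of_nonneg_left h1
        (div_nonneg (by linarith : (0:ℝ) ≤ 16*M^2) hγpos.le)
      calc (16*M^2/γ)*Bq ≤ (16*M^2/γ)*((16*M^2/γ^2)*Aq + (γ^2/(64*M^2))*Dq) := h2
        _ = (γ/4)*Dq + (256/γ^3)*(M^4*Aq) := by field_simp; ring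
  -- F5 : N2 bound
  have F5 : -(2*N2) ≤ (γ/4)*Dq + (4/γ)*Eq4 := by
    have hint : -(2*N2) = ∫ x in (0:ℝ)..L, -(2*(v2 x * (h x)^2)) := by
      rw [hN2d, ← intervalIntegral.integral_const_mul, ← intervalIntegral.integral_neg]
    rw [hint]
    have hmono : (∫ x in (0:ℝ)..L, -(2*(v2 x * (h x)^2)))
        ≤ ∫ x in (0:ℝ)..L, ((γ/4)*(v2 x)^2 + (4/γ)*(h x)^4) := by
      apply intervalIntegral.integral_mono_on hL.le
        (((continuous_const.mul (hc2.mul (hch.pow 2))).neg).intervalIntegrable _ _)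
        (((continuous_const.mul (hc2.pow 2)).add
          (continuous_const.mul (hch.pow 4))).intervalIntegrable _ _)
      intro x _
      apply ptC (by linarith : (0:ℝ) < γ/4) (div_nonneg (by norm_num) hγpos.le)
      have heq : (γ/4)*(4/γ) = 1 := by field_simp
      rw [heq]
    calc (∫ x in (0:ℝ)..L, -(2*(v2 x * (h x)^2)))
        ≤ ∫ x in (0:ℝ)..L, ((γ/4)*(v2 x)^2 + (4/γ)*(h x)^4) := hmono
      _ = (γ/4)*Dq + (4/γ)*Eq4 := by
          rw [intervalIntegral.integral_add (f := fun x => (γ/4)*(v2 x)^2) (g := fun x => (4/γ)*(h x)^4)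
              ((continuous_const.mul (hc2.pow 2)).intervalIntegrable _ _)
              ((continuous_const.mul (hch.pow 4)).intervalIntegrable _ _),
            intervalIntegral.integral_const_mul, intervalIntegral.integral_const_mul,
            hDqd, hEqd]
  -- F6 : linear part estimate
  have F6 : -2*Dq - 2*ν*Bq ≤ -γ*Dq - μ*Bq := by
    have hprod : 0 ≤ (2-γ)*(Dq - lam*Bq) :=
      mul_nonneg (by linarith) (by linarith)
    have hμBq : μ*Bq = 2*(lam*Bq) - γ*(lam*Bq) + 2*(ν*Bq) := by rw [hμd]; ring
    linarith [hprod, hμBq]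
  -- F7 : Poincaré to get A from B
  have F7 : (μ/(2*L^2))*Aq + (μ/(2*L^2))*Aq ≤ μ*Bq := by
    have h1 := mul_le_mul_of_nonneg_left F2
      (div_nonneg hμpos.le (by positivity) : (0:ℝ) ≤ μ/L^2)
    have h2 : (μ/L^2)*(L^2*Bq) = μ*Bq := by field_simp
    have h3 : (μ/(2*L^2))*Aq + (μ/(2*L^2))*Aq = (μ/L^2)*Aq := by ring
    linarith
  -- final: rewrite the goal and close
  rw [hderivg, e7, e8]
  have hC1 : (256/γ^3)*(M^4*Aq) ≤ (256/γ^3 + 4/γ)*M^4*Aq := by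
    have h1 : 0 ≤ M^4*Aq := mul_nonneg (pow_nonneg hM0 4) hAq
    have h2 : (256/γ^3 + 4/γ)*M^4*Aq = (256/γ^3 + 4/γ)*(M^4*Aq) := by ring
    rw [h2]
    apply mul_le_mul_of_nonneg_right _ h1
    have : 0 ≤ 4/γ := div_nonneg (by norm_num) hγpos.le
    linarith
  have hC2 : (4/γ)*Eq4 ≤ (256/γ^3 + 4/γ)*Eq4 := by
    apply mul_le_mul_of_nonneg_right _ hEq
    have : 0 ≤ 256/γ^3 := div_nonneg (by norm_num) (pow_pos hγpos 3).le
    linarith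
  have hαA : 0 ≤ (μ/(2*L^2))*Aq :=
    mul_nonneg (div_nonneg hμpos.le (by positivity)) hAq
  linarith [F3, F4, F5, F6, F7, hC1, hC2, hαA]
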